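/- Let η : ℤ → ℤ satisfy the third-order linear recurrence η_{n+3} - η_{n+2} - η_{n+1} + η_n = p_n - q_n, where p_{mod 7} = [1,0,0,0,1,0,0] and q_{mod 7} = [0,0,1,0,0,1,1] are 7-periodic integer sequences. Suppose (τ_n) satisfies the autonomous Somos-5 recurrence τ_{n-3}τ_{n+2} = γτ_{n-2}τ_{n+1} + δτ_{n-1}τ_n over a field K with all terms nonzero, and define d_n by τ_n = u₀^{η_{n+3}} u₁^{η_{n-1}} d_n for nonzero u₀, u₁ ∈ K. Then d satisfies the non-autonomous Somos-5 recurrence d_{n-3}d_{n+2} = γ_n d_{n-2}d_{n+1} + δ_n d_{n-1}d_n with γ_n = γ u₀^{p_{n+1}} u₁^{p_{n-3}} and δ_n = δ u₀^{q_{n+1}} u₁^{q_{n-3}}. -/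

import Mathlib

lemma per7' (f : ℤ → ℤ) (h : ∀ n, f (n + 7) = f n) (n : ℤ) : f n = f (n % 7) := by
  have key : ∀ m : ℤ, ∀ k : ℤ, f (k + 7 * m) = f k := by
    intro m
    induction m using Int.induction_on with
    | zero => simp
    | succ i ih =>
      intro k
      rw [show k + 7 * ((i : ℤ) + 1) = (k + 7 * i) + 7 by ring, h, ih]
    | pred i ih =>
      intro k
      show f (k + 7 * (-(i : ℤ) - 1)) = f k
      have h2 := h (k + 7 * (-(i : ℤ) - 1))
      rw [show k + 7 * (-(i : ℤ) - 1) + 7 = k + 7 * (-(i : ℤ)) by ring] at h2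
      rw [← ih k, ← h2]
  have := key (n / 7) (n % 7)
  rw [show n % 7 + 7 * (n / 7) = n from by omega] at this
  exact this

theorem stmt_19 {K : Type*} [Field K] (γ δ u₀ u₁ : K)
    (hu₀ : u₀ ≠ 0) (hu₁ : u₁ ≠ 0)
    (p q : ℤ → ℤ)
    (hp7 : ∀ n : ℤ, p (n + 7) = p n) (hq7 : ∀ n : ℤ, q (n + 7) = q n)
    (hp0 : p 0 = 1) (hp1 : p 1 = 0) (hp2 : p 2 = 0) (hp3 : p 3 = 0)
    (hp4 : p 4 = 1) (hp5 : p 5 = 0) (hp6 : p 6 = 0)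
    (hq0 : q 0 = 0) (hq1 : q 1 = 0) (hq2 : q 2 = 1) (hq3 : q 3 = 0)
    (hq4 : q 4 = 0) (hq5 : q 5 = 1) (hq6 : q 6 = 1)
    (η : ℤ → ℤ)
    (hη : ∀ n : ℤ, η (n + 3) - η (n + 2) - η (n + 1) + η n = p n - q n)
    (τ d : ℤ → K) (hτne : ∀ n : ℤ, τ n ≠ 0)
    (hτ : ∀ n : ℤ, τ (n - 3) * τ (n + 2) = γ * (τ (n - 2) * τ (n + 1)) + δ * (τ (n - 1) * τ n))
    (hgauge : ∀ n : ℤ, τ n = u₀ ^ η (n + 3) * u₁ ^ η (n - 1) * d n) :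
    ∀ n : ℤ, d (n - 3) * d (n + 2) =
      (γ * u₀ ^ p (n + 1) * u₁ ^ p (n - 3)) * (d (n - 2) * d (n + 1)) +
      (δ * u₀ ^ q (n + 1) * u₁ ^ q (n - 3)) * (d (n - 1) * d n) := by
  -- the key combinatorial identity for p, q
  have I : ∀ m : ℤ, p m + p (m + 1) + p (m + 2) = q m + q (m + 2) := by
    intro m
    rw [per7' p hp7 m, per7' p hp7 (m + 1), per7' p hp7 (m + 2),
        per7' q hq7 m, per7' q hq7 (m + 2)]
    have h7 : m % 7 = 0 ∨ m % 7 = 1 ∨ m % 7 = 2 ∨ m % 7 = 3 ∨ m % 7 = 4 ∨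
        m % 7 = 5 ∨ m % 7 = 6 := by omega
    rcases h7 with h | h | h | h | h | h | h
    · rw [h, show (m + 1) % 7 = 1 by omega, show (m + 2) % 7 = 2 by omega,
          hp0, hp1, hp2, hq0, hq2]; norm_num
    · rw [h, show (m + 1) % 7 = 2 by omega, show (m + 2) % 7 = 3 by omega,
          hp1, hp2, hp3, hq1, hq3]; norm_num
    · rw [h, show (m + 1) % 7 = 3 by omega, show (m + 2) % 7 = 4 by omega,
          hp2, hp3, hp4, hq2, hq4]; norm_num
    · rw [h, show (m + 1) % 7 = 4 by omega, show (m + 2) % 7 = 5 by omega,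
          hp3, hp4, hp5, hq3, hq5]; norm_num
    · rw [h, show (m + 1) % 7 = 5 by omega, show (m + 2) % 7 = 6 by omega,
          hp4, hp5, hp6, hq4, hq6]; norm_num
    · rw [h, show (m + 1) % 7 = 6 by omega, show (m + 2) % 7 = 0 by omega,
          hp5, hp6, hp0, hq5, hq0]; norm_num
    · rw [h, show (m + 1) % 7 = 0 by omega, show (m + 2) % 7 = 1 by omega,
          hp6, hp0, hp1, hq6, hq1]; norm_num
  intro n
  -- normalized instances of the η recurrence
  have nm : ∀ a b : ℤ, a = b → η a = η b := fun a b h => by rw [h]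
  have hη' : ∀ m : ℤ, η (m + 3) - η (m + 2) - η (m + 1) + η m = p m - q m := hη
  have hA := hη' n
  have hB := hη' (n + 1)
  have hC := hη' (n + 2)
  have hD := hη' (n - 4)
  have hE := hη' (n - 3)
  have hF := hη' (n - 2)
  rw [nm (n+1+3) (n+4) (by ring), nm (n+1+2) (n+3) (by ring), nm (n+1+1) (n+2) (by ring)] at hB
  rw [nm (n+2+3) (n+5) (by ring), nm (n+2+2) (n+4) (by ring), nm (n+2+1) (n+3) (by ring)] at hC
  rw [nm (n-4+3) (n-1) (by ring), nm (n-4+2) (n-2) (by ring), nm (n-4+1) (n-3) (by ring)] at hD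
  rw [nm (n-3+3) (n) (by ring), nm (n-3+2) (n-1) (by ring), nm (n-3+1) (n-2) (by ring)] at hE
  rw [nm (n-2+3) (n+1) (by ring), nm (n-2+2) (n) (by ring), nm (n-2+1) (n-1) (by ring)] at hF
  have I1 := I n
  have I2 := I (n - 4)
  rw [show n - 4 + 1 = n - 3 by ring, show n - 4 + 2 = n - 2 by ring] at I2
  -- exponent identities
  have key1 : η (n+1) + η (n+4) = p (n+1) + (η n + η (n+5)) := by omega
  have key2 : η (n-3) + η n = p (n-3) + (η (n-4) + η (n+1)) := by omega
  have key3 : η (n+2) + η (n+3) = q (n+1) + (η n + η (n+5)) := by omega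
  have key4 : η (n-2) + η (n-1) = q (n-3) + (η (n-4) + η (n+1)) := by omega
  -- multiplicative versions
  have E1 : u₀ ^ η (n+1) * u₁ ^ η (n-3) * (u₀ ^ η (n+4) * u₁ ^ η n) =
      (u₀ ^ p (n+1) * u₁ ^ p (n-3)) * (u₀ ^ (η n + η (n+5)) * u₁ ^ (η (n-4) + η (n+1))) := by
    calc u₀ ^ η (n+1) * u₁ ^ η (n-3) * (u₀ ^ η (n+4) * u₁ ^ η n)
        = u₀ ^ (η (n+1) + η (n+4)) * u₁ ^ (η (n-3) + η n) := by
          rw [zpow_add₀ hu₀, zpow_add₀ hu₁]; ring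
      _ = u₀ ^ (p (n+1) + (η n + η (n+5))) * u₁ ^ (p (n-3) + (η (n-4) + η (n+1))) := by
          rw [key1, key2]
      _ = _ := by rw [zpow_add₀ hu₀, zpow_add₀ hu₁]; ring
  have E2 : u₀ ^ η (n+2) * u₁ ^ η (n-2) * (u₀ ^ η (n+3) * u₁ ^ η (n-1)) =
      (u₀ ^ q (n+1) * u₁ ^ q (n-3)) * (u₀ ^ (η n + η (n+5)) * u₁ ^ (η (n-4) + η (n+1))) := by
    calc u₀ ^ η (n+2) * u₁ ^ η (n-2) * (u₀ ^ η (n+3) * u₁ ^ η (n-1))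
        = u₀ ^ (η (n+2) + η (n+3)) * u₁ ^ (η (n-2) + η (n-1)) := by
          rw [zpow_add₀ hu₀, zpow_add₀ hu₁]; ring
      _ = u₀ ^ (q (n+1) + (η n + η (n+5))) * u₁ ^ (q (n-3) + (η (n-4) + η (n+1))) := by
          rw [key3, key4]
      _ = _ := by rw [zpow_add₀ hu₀, zpow_add₀ hu₁]; ring
  -- gauge identities, normalized
  have g1 : τ (n-3) = u₀ ^ η n * u₁ ^ η (n-4) * d (n-3) := by
    have := hgauge (n-3)
    rwa [nm (n-3+3) n (by ring), nm (n-3-1) (n-4) (by ring)] at this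
  have g2 : τ (n+2) = u₀ ^ η (n+5) * u₁ ^ η (n+1) * d (n+2) := by
    have := hgauge (n+2)
    rwa [nm (n+2+3) (n+5) (by ring), nm (n+2-1) (n+1) (by ring)] at this
  have g3 : τ (n-2) = u₀ ^ η (n+1) * u₁ ^ η (n-3) * d (n-2) := by
    have := hgauge (n-2)
    rwa [nm (n-2+3) (n+1) (by ring), nm (n-2-1) (n-3) (by ring)] at this
  have g4 : τ (n+1) = u₀ ^ η (n+4) * u₁ ^ η n * d (n+1) := by
    have := hgauge (n+1)
    rwa [nm (n+1+3) (n+4) (by ring), nm (n+1-1) n (by ring)] at this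
  have g5 : τ (n-1) = u₀ ^ η (n+2) * u₁ ^ η (n-2) * d (n-1) := by
    have := hgauge (n-1)
    rwa [nm (n-1+3) (n+2) (by ring), nm (n-1-1) (n-2) (by ring)] at this
  have g6 : τ n = u₀ ^ η (n+3) * u₁ ^ η (n-1) * d n := by
    have := hgauge n
    rwa [nm (n-1) (n-1) rfl] at this
  have hτn := hτ n
  rw [g1, g2, g3, g4, g5, g6] at hτn
  have hU : u₀ ^ (η n + η (n+5)) * u₁ ^ (η (n-4) + η (n+1)) ≠ 0 :=
    mul_ne_zero (zpow_ne_zero _ hu₀) (zpow_ne_zero _ hu₁)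
  apply mul_left_cancel₀ hU
  calc u₀ ^ (η n + η (n+5)) * u₁ ^ (η (n-4) + η (n+1)) * (d (n-3) * d (n+2))
      = u₀ ^ η n * u₁ ^ η (n-4) * d (n-3) * (u₀ ^ η (n+5) * u₁ ^ η (n+1) * d (n+2)) := by
        rw [zpow_add₀ hu₀, zpow_add₀ hu₁]; ring
    _ = γ * (u₀ ^ η (n+1) * u₁ ^ η (n-3) * d (n-2) * (u₀ ^ η (n+4) * u₁ ^ η n * d (n+1))) +
        δ * (u₀ ^ η (n+2) * u₁ ^ η (n-2) * d (n-1) * (u₀ ^ η (n+3) * u₁ ^ η (n-1) * d n)) := hτn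
    _ = u₀ ^ (η n + η (n+5)) * u₁ ^ (η (n-4) + η (n+1)) *
        ((γ * u₀ ^ p (n + 1) * u₁ ^ p (n - 3)) * (d (n - 2) * d (n + 1)) +
         (δ * u₀ ^ q (n + 1) * u₁ ^ q (n - 3)) * (d (n - 1) * d n)) := by
        linear_combination (γ * (d (n-2) * d (n+1))) * E1 + (δ * (d (n-1) * d n)) * E2
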